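/- Define f(x,y) = ((x+1)·log(x+y)) / ((x+y)·(log(x+y) − log y)) for x > 0 and y ≥ 1 real. Then for each fixed x > 0, f(x,y) is monotonically increasing in y on [1, ∞). -/

import Mathlib

/-- `f(x,y) = ((x+1)·log(x+y)) / ((x+y)·(log(x+y) − log y))` is, for each fixed `x > 0`,
monotonically increasing in `y` on `[1, ∞)`. -/
theorem stmt1 (x : ℝ) (hx : 0 < x) :
    MonotoneOn (fun y : ℝ =>
      ((x + 1) * Real.log (x + y)) / ((x + y) * (Real.log (x + y) - Real.log y)))
      (Set.Ici 1) := by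
  have hx1 : (0:ℝ) < x + 1 := by linarith
  set h : ℝ → ℝ := fun y => (x + y) * (Real.log (x + y) - Real.log y) / Real.log (x + y)
    with hh
  have hyfacts : ∀ y : ℝ, 1 ≤ y → 0 < y ∧ 1 < x + y ∧ 0 < Real.log (x + y) ∧
      Real.log y < Real.log (x + y) := by
    intro y hy
    have h0 : 0 < y := by linarith
    have h1 : 1 < x + y := by linarith
    exact ⟨h0, h1, Real.log_pos h1, Real.log_lt_log h0 (by linarith)⟩
  have hpos : ∀ y : ℝ, 1 ≤ y → 0 < h y := by
    intro y hy
    obtain ⟨h0, h1, h2, h3⟩ := hyfacts y hy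
    exact div_pos (mul_pos (by linarith) (by linarith)) h2
  have hderiv : ∀ y : ℝ, 1 < y → HasDerivAt h
      (((1 * (Real.log (x+y) - Real.log y) + (x+y) * (1/(x+y) - 1/y)) * Real.log (x+y)
        - (x+y) * (Real.log (x+y) - Real.log y) * (1/(x+y))) / Real.log (x+y) ^ 2) y := by
    intro y hy
    obtain ⟨h0, h1, h2, h3⟩ := hyfacts y hy.le
    have hs0 : x + y ≠ 0 := by linarith
    have hd1 : HasDerivAt (fun y : ℝ => x + y) 1 y := by
      simpa using (hasDerivAt_id y).const_add x
    have hl1 : HasDerivAt (fun y : ℝ => Real.log (x + y)) (1/(x+y)) y := by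
      simpa using hd1.log hs0
    have hl2 : HasDerivAt (fun y : ℝ => Real.log y) (1/y) y := by
      simpa using (hasDerivAt_id y).log h0.ne'
    exact (hd1.mul (hl1.sub hl2)).div hl1 h2.ne'
  have hanti : AntitoneOn h (Set.Ici 1) := by
    apply antitoneOn_of_deriv_nonpos (convex_Ici 1)
    · apply ContinuousOn.div
      · apply ContinuousOn.mul
        · exact (continuous_const.add continuous_id).continuousOn
        · apply ContinuousOn.sub
          · apply ContinuousOn.log ((continuous_const.add continuous_id).continuousOn)
            intro y hy
            have := hyfacts y hy
            show x + y ≠ 0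
            linarith [this.2.1]
          · apply ContinuousOn.log continuousOn_id
            intro y hy
            have := hyfacts y hy
            simp only [id]
            linarith [this.1]
      · apply ContinuousOn.log ((continuous_const.add continuous_id).continuousOn)
        intro y hy
        have := hyfacts y hy
        show x + y ≠ 0
        linarith [this.2.1]
      · intro y hy
        exact (hyfacts y hy).2.2.1.ne'
    · intro y hy
      rw [interior_Ici] at hy
      exact (hderiv y hy).differentiableAt.differentiableWithinAt
    · intro y hy
      rw [interior_Ici] at hy
      obtain ⟨h0, h1, h2, h3⟩ := hyfacts y hy.le
      rw [(hderiv y hy).deriv]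
      apply div_nonpos_of_nonpos_of_nonneg _ (sq_nonneg _)
      have hsy : (x + y)/y = Real.exp (Real.log (x+y) - Real.log y) := by
        rw [Real.exp_sub, Real.exp_log (by linarith), Real.exp_log h0]
      have hexp := Real.add_one_le_exp (Real.log (x+y) - Real.log y)
      have hd : 0 < Real.log (x+y) - Real.log y := by linarith
      have hnum : (1 * (Real.log (x+y) - Real.log y) + (x+y) * (1/(x+y) - 1/y)) * Real.log (x+y)
          - (x+y) * (Real.log (x+y) - Real.log y) * (1/(x+y))
          = (Real.log (x+y) - Real.log y + 1 - (x+y)/y) * Real.log (x+y)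
            - (Real.log (x+y) - Real.log y) := by
        field_simp
        ring
      rw [hnum, hsy]
      nlinarith
  have hfa : ∀ y : ℝ, 1 ≤ y →
      ((x + 1) * Real.log (x + y)) / ((x + y) * (Real.log (x + y) - Real.log y))
        = (x + 1) / h y := by
    intro y hy
    rw [hh, div_div_eq_mul_div]
  intro a ha b hb hab
  simp only [Set.mem_Ici] at ha hb
  simp only
  rw [hfa a ha, hfa b hb]
  exact div_le_div_of_nonneg_left hx1.le (hpos b hb) (hanti (Set.mem_Ici.mpr ha)
    (Set.mem_Ici.mpr hb) hab)
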